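/- Let k be a field and let A be an integral domain that is a k-algebra, equipped with k-linear derivations δ1,...,δm. Suppose there is a finite-dimensional k-vector subspace V of A and a set S of ideals of A satisfying: (i) δi(I) ⊆ I for all i = 1,...,m and all I ∈ S; (ii) the intersection of all ideals in S is the zero ideal; and (iii) V ∩ I ≠ (0) for all I ∈ S. Then there exists f in the fraction field Frac(A) with f not in (the image of) k such that δi(f) = 0 for all i = 1,...,m, where each δi is extended uniquely to a derivation of Frac(A). -/

import Mathlib

/-- Let `k` be a field and `A` an integral domain `k`-algebra with
`k`-linear derivations `δ 1, …, δ m`.  Suppose there is a finite-dimensional `k`-subspace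
`V` of `A` and a set `S` of ideals such that (i) every ideal in `S` is a differential
ideal, (ii) the intersection of the ideals in `S` is zero, and (iii) every ideal in `S`
meets `V` nontrivially.  Then there is `f ∈ Frac(A) ∖ k` with `δ i f = 0` for all `i`.
The conclusion is expressed via a representation `f = a / b`: the unique extension of
`δ` to `Frac(A)` kills `a / b` iff `δ a * b = a * δ b`, and `a / b` lies in (the image
of) `k` iff `a = c • b` for some `c : k`. -/
theorem exists_nonconstant_differential_constant
    (k A : Type*) [Field k] [CommRing A] [IsDomain A] [Algebra k A]
    (m : ℕ) (δ : Fin m → Derivation k A A)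
    (V : Submodule k A) (hV : FiniteDimensional k V)
    (S : Set (Ideal A))
    (h1 : ∀ I ∈ S, ∀ a ∈ I, ∀ i : Fin m, δ i a ∈ I)
    (h2 : sInf S = ⊥)
    (h3 : ∀ I ∈ S, ∃ v : A, v ≠ 0 ∧ v ∈ V ∧ v ∈ I) :
    ∃ a b : A, b ≠ 0 ∧ (¬ ∃ c : k, a = algebraMap k A c * b) ∧
      ∀ i : Fin m, δ i a * b = a * δ i b := by
  classical
  set n := Module.finrank k V with hn
  let v : Module.Basis (Fin n) k V := Module.finBasis k V
  let vv : Fin n → A := fun q => (v q : A)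
  have livv : LinearIndependent k vv :=
    v.linearIndependent.map' V.subtype V.ker_subtype
  -- iterated derivatives indexed by words
  let D : List (Fin m) → (A →ₗ[k] A) := fun l =>
    l.foldr (fun i g => (δ i).toLinearMap.comp g) LinearMap.id
  have hD_nil : ∀ a : A, D [] a = a := fun a => rfl
  have hD_cons : ∀ (i : Fin m) (l : List (Fin m)) (a : A), D (i :: l) a = δ i (D l a) :=
    fun i l a => rfl
  have hDI : ∀ (l : List (Fin m)) (I : Ideal A), I ∈ S → ∀ a ∈ I, D l a ∈ I := by
    intro l
    induction l with
    | nil => intro I hI a ha; simpa [hD_nil] using ha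
    | cons i l ih =>
      intro I hI a ha
      rw [hD_cons]
      exact h1 I hI _ (ih I hI a ha) i
  let F := FractionRing A
  let ι : A →+* F := algebraMap A F
  have ιinj : Function.Injective ι := IsFractionRing.injective A F
  let P : (Fin n → A) → Prop := fun g => ∀ l : List (Fin m), ∑ q, g q * D l (vv q) = 0
  let w : List (Fin m) → (Fin n → F) := fun l q => ι (D l (vv q))
  -- Step A : there is a nonzero `g` with `P g`
  have hex : ∃ g : Fin n → A, g ≠ 0 ∧ P g := by
    by_cases hspan : Submodule.span F (Set.range w) = ⊤
    · -- determinant argument shows this case contradicts `h2`/`h3`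
      exfalso
      obtain ⟨t, hts, hsp, hli⟩ := exists_linearIndependent F (Set.range w)
      rw [hspan] at hsp
      let B : Module.Basis t F (Fin n → F) :=
        Module.Basis.mk hli (by rw [Subtype.range_coe]; exact hsp.ge)
      let e : t ≃ Fin n := B.indexEquiv (Pi.basisFun F (Fin n))
      let r : Fin n → (Fin n → F) := fun p => ((e.symm p : t) : Fin n → F)
      have hr : LinearIndependent F r := hli.comp e.symm e.symm.injective
      have hrw : ∀ p, ∃ l : List (Fin m), w l = r p := fun p => hts (e.symm p).2
      choose lw hlw using hrw
      let N : Matrix (Fin n) (Fin n) A := Matrix.of fun p q => D (lw p) (vv q)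
      have hNF : ι.mapMatrix N = Matrix.of fun p q => r p q := by
        ext p q
        simp only [RingHom.mapMatrix_apply, Matrix.map_apply, Matrix.of_apply, N]
        rw [← hlw p]
      have hrowsNF : LinearIndependent F (fun p => (ι.mapMatrix N) p) := by
        have : (fun p => (ι.mapMatrix N) p) = r := by
          funext p; rw [hNF]; rfl
        rw [this]; exact hr
      have hdetF : (ι.mapMatrix N).det ≠ 0 :=
        ((Matrix.isUnit_iff_isUnit_det _).mp
          (Matrix.linearIndependent_rows_iff_isUnit.mp hrowsNF)).ne_zero
      have hdetA : N.det ≠ 0 := by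
        intro h
        rw [← RingHom.map_det, h, map_zero] at hdetF
        exact hdetF rfl
      -- show `N.det ∈ I` for every `I ∈ S`
      have hmem : ∀ I ∈ S, N.det ∈ I := by
        intro I hI
        obtain ⟨x, hx0, hxV, hxI⟩ := h3 I hI
        let c : Fin n → k := v.repr ⟨x, hxV⟩
        have hxsum : x = ∑ q, c q • vv q := by
          have := v.sum_repr ⟨x, hxV⟩
          have := congrArg (Subtype.val : V → A) this
          simp only [AddSubmonoidClass.coe_finset_sum, SetLike.val_smul] at this
          exact this.symm
        have hc0 : ∃ q, c q ≠ 0 := by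
          by_contra hall
          push_neg at hall
          apply hx0
          rw [hxsum]
          simp [hall]
        let cA : Fin n → A := fun q => algebraMap k A (c q)
        have hu : ∀ p, (∑ q, N p q * cA q) ∈ I := by
          intro p
          have : (∑ q, N p q * cA q) = D (lw p) x := by
            rw [hxsum, map_sum]
            refine Finset.sum_congr rfl fun q _ => ?_
            rw [map_smul, Algebra.smul_def, mul_comm]
            rfl
          rw [this]
          exact hDI _ I hI x hxI
        have hkey : ∀ q', N.det * cA q' = ∑ p, N.adjugate q' p * ∑ q, N p q * cA q := by
          intro q'
          have : ∑ p, N.adjugate q' p * ∑ q, N p q * cA q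
              = ∑ q, (N.adjugate * N) q' q * cA q := by
            simp_rw [Finset.mul_sum]
            rw [Finset.sum_comm]
            refine Finset.sum_congr rfl fun q _ => ?_
            rw [Matrix.mul_apply, Finset.sum_mul]
            refine Finset.sum_congr rfl fun p _ => ?_
            ring
          rw [this, Matrix.adjugate_mul]
          simp [Matrix.one_apply, Finset.mul_sum, mul_assoc]
        have hdc : ∀ q', N.det * cA q' ∈ I := by
          intro q'
          rw [hkey q']
          exact Ideal.sum_mem I fun p _ => I.mul_mem_left _ (hu p)
        obtain ⟨q', hq'⟩ := hc0
        have hunit : IsUnit (cA q') := (Ne.isUnit hq').map (algebraMap k A)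
        obtain ⟨u, hu'⟩ := hunit
        have : N.det = (N.det * cA q') * ((u⁻¹ : Units A) : A) := by
          rw [← hu', mul_assoc, Units.mul_inv, mul_one]
        rw [this]
        exact I.mul_mem_right _ (hdc q')
      have : N.det ∈ sInf S := Ideal.mem_sInf.mpr fun {I} hI => hmem I hI
      rw [h2] at this
      exact hdetA (Ideal.mem_bot.mp this)
    · -- a nonzero functional vanishing on the span gives `g` after clearing denominators
      have hlt : Submodule.span F (Set.range w) < ⊤ := lt_top_iff_ne_top.mpr hspan
      obtain ⟨f, hf0, hfmap⟩ :=
        Submodule.exists_dual_map_eq_bot_of_lt_top hlt inferInstance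
      let lam : Fin n → F := fun q => f (fun j => if q = j then 1 else 0)
      have hfx : ∀ x : Fin n → F, f x = ∑ q, x q * lam q := by
        intro x
        rw [LinearMap.pi_apply_eq_sum_univ f x]
        refine Finset.sum_congr rfl fun q _ => ?_
        rw [smul_eq_mul]
      have hfw : ∀ l : List (Fin m), f (w l) = 0 := by
        intro l
        have hmem : w l ∈ Submodule.span F (Set.range w) :=
          Submodule.subset_span ⟨l, rfl⟩
        have : f (w l) ∈ (Submodule.span F (Set.range w)).map f :=
          Submodule.mem_map_of_mem hmem
        rw [hfmap] at this
        exact Submodule.mem_bot F |>.mp this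
      have hlamne : ∃ q, lam q ≠ 0 := by
        by_contra hall
        push_neg at hall
        apply hf0
        refine LinearMap.ext fun x => ?_
        rw [hfx x]
        simp [hall]
      obtain ⟨b, hb⟩ :=
        IsLocalization.exist_integer_multiples (nonZeroDivisors A) Finset.univ lam
      have hbne : (b : A) ≠ 0 := nonZeroDivisors.ne_zero b.2
      have hbF : ι (b : A) ≠ 0 := fun h => hbne (ιinj (by rw [h]; exact (map_zero ι).symm))
      choose g hg using fun q => hb q (Finset.mem_univ q)
      have hgq : ∀ q, ι (g q) = ι (b : A) * lam q := by
        intro q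
        rw [hg q, Algebra.smul_def]
      refine ⟨g, ?_, ?_⟩
      · obtain ⟨q, hq⟩ := hlamne
        intro h0
        have : ι (g q) = 0 := by rw [congrFun h0 q]; exact map_zero ι
        rw [hgq q] at this
        exact hq ((mul_eq_zero.mp this).resolve_left hbF)
      · intro l
        apply ιinj
        rw [map_zero, map_sum]
        have : ∑ q, ι (g q * D l (vv q)) = ι (b : A) * f (w l) := by
          rw [hfx (w l), Finset.mul_sum]
          refine Finset.sum_congr rfl fun q _ => ?_
          rw [map_mul, hgq q]
          show ι (b : A) * lam q * w l q = ι (b : A) * (w l q * lam q)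
          ring
        rw [this, hfw l, mul_zero]
  -- Step B : take such a `g` with minimal support
  let supp : (Fin n → A) → ℕ := fun g => (Finset.univ.filter fun q => g q ≠ 0).card
  have hexN : ∃ N' : ℕ, ∃ g : Fin n → A, (g ≠ 0 ∧ P g) ∧ supp g = N' := by
    obtain ⟨g, hg0, hgP⟩ := hex
    exact ⟨supp g, g, ⟨hg0, hgP⟩, rfl⟩
  let N0 := Nat.find hexN
  obtain ⟨g, ⟨hg0, hgP⟩, hgcard⟩ := Nat.find_spec hexN
  have hmin : ∀ h : Fin n → A, h ≠ 0 → P h → N0 ≤ supp h := by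
    intro h h0 hP
    exact Nat.find_min' hexN ⟨h, ⟨h0, hP⟩, rfl⟩
  obtain ⟨q0, hq0pre⟩ := Function.ne_iff.mp hg0
  have hq0 : g q0 ≠ 0 := by simpa using hq0pre
  -- Step C : all the "Wronskian" combinations vanish
  have hwrons : ∀ (i : Fin m) (q : Fin n), g q0 * δ i (g q) = δ i (g q0) * g q := by
    intro i
    set h' : Fin n → A := fun q => g q0 * δ i (g q) - δ i (g q0) * g q with hh'
    have hPh' : P h' := by
      intro l
      have hder : ∑ q, δ i (g q) * D l (vv q) = 0 := by
        have h0 : δ i (∑ q, g q * D l (vv q)) = 0 := by rw [hgP l, map_zero]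
        rw [map_sum] at h0
        have : ∀ q ∈ Finset.univ, δ i (g q * D l (vv q))
            = δ i (g q) * D l (vv q) + g q * D (i :: l) (vv q) := by
          intro q _
          rw [Derivation.leibniz, smul_eq_mul, smul_eq_mul, hD_cons]
          ring
        rw [Finset.sum_congr rfl this, Finset.sum_add_distrib, hgP (i :: l), add_zero] at h0
        exact h0
      have : ∑ q, h' q * D l (vv q)
          = g q0 * (∑ q, δ i (g q) * D l (vv q)) - δ i (g q0) * (∑ q, g q * D l (vv q)) := by
        rw [Finset.mul_sum, Finset.mul_sum, ← Finset.sum_sub_distrib]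
        refine Finset.sum_congr rfl fun q _ => ?_
        simp only [hh']
        ring
      rw [this, hder, hgP l, mul_zero, mul_zero, sub_zero]
    by_contra hne
    push_neg at hne
    obtain ⟨q1, hq1⟩ := hne
    have hh'ne : h' ≠ 0 := by
      intro h0
      apply hq1
      have := congrFun h0 q1
      simp only [hh', Pi.zero_apply, sub_eq_zero] at this
      exact this
    have hsub : (Finset.univ.filter fun q => h' q ≠ 0)
        ⊆ (Finset.univ.filter fun q => g q ≠ 0).erase q0 := by
      intro q hq
      simp only [Finset.mem_filter, Finset.mem_univ, true_and] at hq
      rw [Finset.mem_erase]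
      constructor
      · intro h
        apply hq
        simp only [hh', h]
        ring
      · simp only [Finset.mem_filter, Finset.mem_univ, true_and]
        intro h
        apply hq
        simp only [hh', h, map_zero, mul_zero, zero_mul, sub_zero]
    have hlt : supp h' < supp g := by
      calc supp h' ≤ ((Finset.univ.filter fun q => g q ≠ 0).erase q0).card :=
            Finset.card_le_card hsub
        _ < (Finset.univ.filter fun q => g q ≠ 0).card := by
            apply Finset.card_erase_lt_of_mem
            simp [hq0]
        _ = supp g := rfl
    rw [hgcard] at hlt
    exact absurd (hmin h' hh'ne hPh') (not_le.mpr hlt)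
  -- Step D : conclude
  by_contra hcon
  push_neg at hcon
  have hrep : ∀ q, ∃ c : k, g q = algebraMap k A c * g q0 := by
    intro q
    by_contra hc
    push_neg at hc
    have hall : ∀ i : Fin m, δ i (g q) * g q0 = g q * δ i (g q0) := by
      intro i
      have := hwrons i q
      linear_combination this
    obtain ⟨i, hi⟩ := hcon (g q) (g q0) hq0 hc
    exact hi (hall i)
  choose c hc using hrep
  have hsum : g q0 * ∑ q, c q • vv q = 0 := by
    have := hgP []
    simp only [hD_nil] at this
    rw [Finset.mul_sum]
    rw [← this]
    refine Finset.sum_congr rfl fun q _ => ?_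
    rw [hc q, Algebra.smul_def]
    ring
  have hzero : ∑ q, c q • vv q = 0 := by
    rcases mul_eq_zero.mp hsum with h | h
    · exact absurd h hq0
    · exact h
  have hcall : ∀ q, c q = 0 := Fintype.linearIndependent_iff.mp livv c hzero
  apply hq0
  rw [hc q0, hcall q0, map_zero, zero_mul]
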